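/- The Shapley value of an n-leaf tree game is a linear function of the edge weights: φ_i(N, v_T) = Σ_{k ∈ E} (f(i,k)/(n·c(i,k))) · α_k, where α_k is the weight of edge k, and c(i,k), f(i,k) are the numbers of leaves in the components of T−k containing and not containing leaf i, respectively. -/

import Mathlib

open Finset

/-- The Shapley value of the game `v` on player set `Fin n`. -/
noncomputable def shapley {n : ℕ} (v : Finset (Fin n) → ℝ) (i : Fin n) : ℝ :=
  ((n.factorial : ℝ))⁻¹ *
    ∑ S ∈ Finset.univ.powerset.filter (fun S => i ∈ S),
      ((S.card - 1).factorial : ℝ) * ((n - S.card).factorial : ℝ) * (v S - v (S.erase i))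

/-- The tree game determined by the splits `side e` and edge weights `α`. -/
noncomputable def treeGame {n : ℕ} {E : Type*} [Fintype E] (side : E → Finset (Fin n))
    (α : E → ℝ) (S : Finset (Fin n)) : ℝ :=
  ∑ e, α e * (if (S ∩ side e).Nonempty ∧ (S \ side e).Nonempty then 1 else 0)

/-- `cnt side i e` is the split count `c(i,e)`: the number of leaves on the side of edge `e`
containing leaf `i`. -/
def cnt {n : ℕ} {E : Type*} (side : E → Finset (Fin n)) (i : Fin n) (e : E) : ℕ :=
  if i ∈ side e then (side e).card else n - (side e).card

/-- Compatibility of two splits (holds for the splits of edges of a tree). -/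
def Compatible {n : ℕ} (s t : Finset (Fin n)) : Prop :=
  s ∩ t = ∅ ∨ s \ t = ∅ ∨ t \ s = ∅ ∨ s ∪ t = Finset.univ

lemma step_eq (f c t : ℕ) (hc : 1 ≤ c) (ht : t < f) :
    f.choose (t+1) * (t+1).factorial * (c + f - 1 - t).factorial =
      f.choose (t+2) * (t+2).factorial * (c + f - 2 - t).factorial +
        c * (f.choose (t+1) * (t+1).factorial * (c + f - 2 - t).factorial) := by
  have h1 : f.choose (t+2) * (t+2) = f.choose (t+1) * (f - (t+1)) :=
    Nat.choose_succ_right_eq f (t+1)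
  have h2 : (t+2).factorial = (t+2) * (t+1).factorial := rfl
  have h3 : c + f - 1 - t = (c + f - 2 - t) + 1 := by omega
  rw [h3, Nat.factorial_succ (c + f - 2 - t)]
  have h4 : f.choose (t+2) * (t+2).factorial = f.choose (t+1) * (f - (t+1)) * (t+1).factorial := by
    rw [h2, ← mul_assoc, h1]
  rw [h4]
  have h5 : c + f - 2 - t + 1 = (f - (t+1)) + c := by omega
  conv_lhs => rw [h5]
  ring

lemma telescope (f c : ℕ) (hc : 1 ≤ c) :
    ∀ m ≤ f, f.choose 1 * Nat.factorial 1 * (c + f - 1 - 0).factorial =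
      f.choose (m+1) * (m+1).factorial * (c + f - 1 - m).factorial +
        c * ∑ t ∈ Finset.range m, f.choose (t+1) * (t+1).factorial * (c + f - 2 - t).factorial := by
  intro m hm
  induction m with
  | zero => simp
  | succ k ih =>
      rw [ih (by omega), Finset.sum_range_succ, step_eq f c k hc (by omega)]
      have : c + f - 1 - (k+1) = c + f - 2 - k := by omega
      rw [this]; ring

lemma key (f c : ℕ) (hc : 1 ≤ c) :
    c * ∑ t ∈ Finset.range f, f.choose (t+1) * (t+1).factorial * (c + f - 2 - t).factorial =
      f * (c + f - 1).factorial := by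
  have h := telescope f c hc f le_rfl
  rw [Nat.choose_eq_zero_of_lt (Nat.lt_succ_self f), zero_mul, zero_mul, zero_add,
    Nat.choose_one_right, Nat.factorial_one, mul_one, Nat.sub_zero] at h
  exact h.symm

lemma marginal {n : ℕ} (s : Finset (Fin n)) (i : Fin n) (hi : i ∈ s) (S : Finset (Fin n))
    (hiS : i ∈ S) :
    (if (S ∩ s).Nonempty ∧ (S \ s).Nonempty then (1:ℝ) else 0)
      - (if ((S.erase i) ∩ s).Nonempty ∧ ((S.erase i) \ s).Nonempty then (1:ℝ) else 0)
    = if S ∩ s = {i} ∧ (S \ s).Nonempty then 1 else 0 := by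
  have h1 : (S ∩ s).Nonempty := ⟨i, Finset.mem_inter.mpr ⟨hiS, hi⟩⟩
  have h2 : (S.erase i) \ s = S \ s := by
    ext x
    simp only [Finset.mem_sdiff, Finset.mem_erase]
    constructor
    · rintro ⟨⟨_, hx⟩, hxs⟩; exact ⟨hx, hxs⟩
    · rintro ⟨hx, hxs⟩; exact ⟨⟨fun h => hxs (h ▸ hi), hx⟩, hxs⟩
  have h3 : (S.erase i) ∩ s = (S ∩ s).erase i := by
    ext x; simp only [Finset.mem_inter, Finset.mem_erase]; tauto
  by_cases hne : (S \ s).Nonempty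
  · simp only [h1, hne, and_true, if_true, h2, h3]
    by_cases h4 : S ∩ s = {i}
    · have : ((S ∩ s).erase i) = ∅ := by rw [h4]; simp
      simp [h4, hne, this]
    · have : ((S ∩ s).erase i).Nonempty := by
        rcases Finset.eq_empty_or_nonempty ((S ∩ s).erase i) with h | h
        · rw [Finset.erase_eq_empty_iff] at h
          rcases h with h | h
          · exact absurd h (Finset.nonempty_iff_ne_empty.mp h1)
          · exact absurd h h4
        · exact h
      simp [h4, hne, this]
  · simp [hne, h2]

lemma shapley_cut {n : ℕ} (hn : 2 ≤ n) (s : Finset (Fin n)) (i : Fin n) (hi : i ∈ s)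
    (hs : s ≠ Finset.univ) :
    shapley (fun S => if (S ∩ s).Nonempty ∧ (S \ s).Nonempty then (1:ℝ) else 0) i
      = ((n - s.card : ℕ) : ℝ) / ((n : ℝ) * (s.card : ℝ)) := by
  classical
  set c := s.card with hc
  set f := n - c with hf
  have hc1 : 1 ≤ c := Finset.card_pos.mpr ⟨i, hi⟩
  have hcn : c < n := by
    have := Finset.card_lt_card (Finset.ssubset_univ_iff.mpr hs)
    simpa using this
  have hcompl : (sᶜ : Finset (Fin n)).card = f := by
    rw [Finset.card_compl, Fintype.card_fin]
  rw [shapley]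
  -- rewrite each marginal
  have hsum1 : ∑ S ∈ Finset.univ.powerset.filter (fun S => i ∈ S),
      ((S.card - 1).factorial : ℝ) * ((n - S.card).factorial : ℝ) *
        ((if (S ∩ s).Nonempty ∧ (S \ s).Nonempty then (1:ℝ) else 0)
          - (if ((S.erase i) ∩ s).Nonempty ∧ ((S.erase i) \ s).Nonempty then (1:ℝ) else 0))
    = ∑ S ∈ (Finset.univ.powerset.filter (fun S => i ∈ S)).filter
        (fun S => S ∩ s = {i} ∧ (S \ s).Nonempty),
      ((S.card - 1).factorial : ℝ) * ((n - S.card).factorial : ℝ) := by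
    conv_rhs => rw [Finset.sum_filter]
    refine Finset.sum_congr rfl fun S hS => ?_
    have hiS : i ∈ S := (Finset.mem_filter.mp hS).2
    rw [marginal s i hi S hiS]
    by_cases h : S ∩ s = {i} ∧ (S \ s).Nonempty <;> simp [h]
  rw [hsum1]
  -- reindex by T = S.erase i
  have hsum2 : ∑ S ∈ (Finset.univ.powerset.filter (fun S => i ∈ S)).filter
        (fun S => S ∩ s = {i} ∧ (S \ s).Nonempty),
      ((S.card - 1).factorial : ℝ) * ((n - S.card).factorial : ℝ)
    = ∑ T ∈ (sᶜ : Finset (Fin n)).powerset.filter (fun T => T.Nonempty),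
      ((T.card).factorial : ℝ) * ((n - (T.card + 1)).factorial : ℝ) := by
    refine Finset.sum_nbij' (fun S => S.erase i) (fun T => insert i T) ?_ ?_ ?_ ?_ ?_
    · intro S hS
      simp only [Finset.mem_filter, Finset.mem_powerset] at hS ⊢
      obtain ⟨⟨-, hiS⟩, hSs, hne⟩ := hS
      constructor
      · intro x hx
        simp only [Finset.mem_erase] at hx
        simp only [Finset.mem_compl]
        intro hxs
        have : x ∈ S ∩ s := Finset.mem_inter.mpr ⟨hx.2, hxs⟩
        rw [hSs] at this
        exact hx.1 (Finset.mem_singleton.mp this)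
      · obtain ⟨x, hx⟩ := hne
        refine ⟨x, Finset.mem_erase.mpr ⟨?_, (Finset.mem_sdiff.mp hx).1⟩⟩
        intro h; subst h; exact (Finset.mem_sdiff.mp hx).2 hi
    · intro T hT
      simp only [Finset.mem_filter, Finset.mem_powerset] at hT ⊢
      obtain ⟨hTs, hne⟩ := hT
      have hiT : i ∉ T := fun h => (Finset.mem_compl.mp (hTs h)) hi
      refine ⟨⟨Finset.subset_univ _, Finset.mem_insert_self i T⟩, ?_, ?_⟩
      · ext x
        simp only [Finset.mem_inter, Finset.mem_insert, Finset.mem_singleton]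
        constructor
        · rintro ⟨hx | hx, hxs⟩
          · exact hx
          · exact absurd hxs (Finset.mem_compl.mp (hTs hx))
        · rintro rfl; exact ⟨Or.inl rfl, hi⟩
      · obtain ⟨x, hx⟩ := hne
        exact ⟨x, Finset.mem_sdiff.mpr ⟨Finset.mem_insert_of_mem hx,
          Finset.mem_compl.mp (hTs hx)⟩⟩
    · intro S hS
      simp only [Finset.mem_filter] at hS
      exact Finset.insert_erase hS.1.2
    · intro T hT
      simp only [Finset.mem_filter, Finset.mem_powerset] at hT
      have hiT : i ∉ T := fun h => (Finset.mem_compl.mp (hT.1 h)) hi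
      exact Finset.erase_insert hiT
    · intro S hS
      simp only [Finset.mem_filter] at hS
      have hiS : i ∈ S := hS.1.2
      have hcard : (S.erase i).card = S.card - 1 := Finset.card_erase_of_mem hiS
      have hS1 : 1 ≤ S.card := Finset.card_pos.mpr ⟨i, hiS⟩
      rw [hcard, Nat.sub_add_cancel hS1]
  rw [hsum2]
  -- remove the ∅ term and group by cardinality
  have hsplit : ∑ T ∈ (sᶜ : Finset (Fin n)).powerset.filter (fun T => T.Nonempty),
      ((T.card).factorial : ℝ) * ((n - (T.card + 1)).factorial : ℝ)
    = (∑ T ∈ (sᶜ : Finset (Fin n)).powerset,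
        ((T.card).factorial : ℝ) * ((n - (T.card + 1)).factorial : ℝ))
      - ((n - 1).factorial : ℝ) := by
    have h := Finset.sum_filter_add_sum_filter_not (sᶜ : Finset (Fin n)).powerset
      (fun T => T.Nonempty)
      (fun T => ((T.card).factorial : ℝ) * ((n - (T.card + 1)).factorial : ℝ))
    have hnotne : (sᶜ : Finset (Fin n)).powerset.filter (fun T => ¬ T.Nonempty) = {∅} := by
      ext T
      simp only [Finset.mem_filter, Finset.mem_powerset, Finset.not_nonempty_iff_eq_empty,
        Finset.mem_singleton]
      constructor
      · rintro ⟨-, h⟩; exact h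
      · rintro rfl; exact ⟨Finset.empty_subset _, rfl⟩
    rw [hnotne] at h
    simp only [Finset.sum_singleton, Finset.card_empty, Nat.factorial_zero] at h
    have : ((n : ℕ) - (0 + 1)) = n - 1 := by omega
    rw [this] at h
    push_cast at h ⊢
    linarith
  rw [hsplit]
  have hpow : ∑ T ∈ (sᶜ : Finset (Fin n)).powerset,
      ((T.card).factorial : ℝ) * ((n - (T.card + 1)).factorial : ℝ)
    = ∑ j ∈ Finset.range (f + 1),
        (f.choose j : ℝ) * ((j.factorial : ℝ) * ((n - (j + 1)).factorial : ℝ)) := by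
    rw [Finset.sum_powerset, hcompl]
    refine Finset.sum_congr rfl fun j hj => ?_
    calc ∑ T ∈ Finset.powersetCard j (sᶜ : Finset (Fin n)),
          ((T.card).factorial : ℝ) * ((n - (T.card + 1)).factorial : ℝ)
        = ∑ _T ∈ Finset.powersetCard j (sᶜ : Finset (Fin n)),
          ((j.factorial : ℝ) * ((n - (j + 1)).factorial : ℝ)) :=
          Finset.sum_congr rfl (fun T hT => by
            rw [(Finset.mem_powersetCard.mp hT).2])
      _ = (f.choose j : ℝ) * ((j.factorial : ℝ) * ((n - (j + 1)).factorial : ℝ)) := by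
          rw [Finset.sum_const, Finset.card_powersetCard, hcompl, nsmul_eq_mul]
  rw [hpow, Finset.sum_range_succ']
  simp only [Nat.choose_zero_right, Nat.factorial_zero, Nat.cast_one, one_mul]
  have h01 : ((n : ℕ) - (0 + 1)) = n - 1 := by omega
  rw [h01]
  ring_nf
  -- now use the key identity
  have hnc : c + f = n := by omega
  have hterm : ∀ x ∈ Finset.range f,
      ((f.choose (x + 1) : ℕ) : ℝ) * (((x + 1).factorial : ℝ) * ((n - (x + 1 + 1)).factorial : ℝ))
      = ((f.choose (x + 1) * (x + 1).factorial * (c + f - 2 - x).factorial : ℕ) : ℝ) := by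
    intro x hx
    have : n - (x + 1 + 1) = c + f - 2 - x := by omega
    rw [this]
    push_cast
    ring
  have hterm' : ∀ x ∈ Finset.range f,
      ((f.choose (1 + x) : ℕ) : ℝ) * ((1 + x).factorial : ℝ) * ((n - (2 + x)).factorial : ℝ)
      = ((f.choose (x + 1) * (x + 1).factorial * (c + f - 2 - x).factorial : ℕ) : ℝ) := by
    intro x hx
    rw [← hterm x hx, add_comm 1 x, show 2 + x = x + 1 + 1 by omega]; ring
  rw [Finset.sum_congr rfl hterm', ← Nat.cast_sum,
    show (f : ℝ) * (n : ℝ)⁻¹ * (c : ℝ)⁻¹ = (f : ℝ) / ((n : ℝ) * (c : ℝ)) by ring]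
  have hkey := key f c hc1
  rw [show c + f - 1 = n - 1 from by omega] at hkey
  have hkeyR : (c : ℝ) * ((∑ t ∈ Finset.range f,
      f.choose (t + 1) * (t + 1).factorial * (c + f - 2 - t).factorial : ℕ) : ℝ)
      = (f : ℝ) * ((n - 1).factorial : ℝ) := by exact_mod_cast hkey
  have hfacR : (n : ℝ) * (((n : ℕ) - 1).factorial : ℝ) = (n.factorial : ℝ) := by
    exact_mod_cast Nat.mul_factorial_pred (by omega : n ≠ 0)
  have h1 : (0 : ℝ) < (n.factorial : ℝ) := by exact_mod_cast n.factorial_pos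
  have h2 : (0 : ℝ) < (n : ℝ) * (c : ℝ) := by
    have : (0:ℝ) < (n:ℝ) := by exact_mod_cast (by omega : 0 < n)
    have : (0:ℝ) < (c:ℝ) := by exact_mod_cast hc1
    positivity
  rw [inv_mul_eq_div, div_eq_div_iff (ne_of_gt h1) (ne_of_gt h2)]
  linear_combination (n : ℝ) * hkeyR + (f : ℝ) * hfacR

lemma shapley_linear {n : ℕ} {E : Type*} [Fintype E] (side : E → Finset (Fin n))
    (α : E → ℝ) (i : Fin n) :
    shapley (treeGame side α) i =
      ∑ e, α e * shapley (fun S => if (S ∩ side e).Nonempty ∧ (S \ side e).Nonempty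
        then (1:ℝ) else 0) i := by
  simp only [shapley, treeGame, ← Finset.sum_sub_distrib, ← mul_sub, Finset.mul_sum]
  rw [Finset.sum_comm]
  exact Finset.sum_congr rfl fun e _ => Finset.sum_congr rfl fun S _ => by ring

lemma cut_compl {n : ℕ} (s : Finset (Fin n)) :
    (fun S : Finset (Fin n) => if (S ∩ s).Nonempty ∧ (S \ s).Nonempty then (1:ℝ) else 0)
      = (fun S => if (S ∩ sᶜ).Nonempty ∧ (S \ sᶜ).Nonempty then (1:ℝ) else 0) := by
  funext S
  have e1 : S \ s = S ∩ sᶜ := by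
    ext x; simp [Finset.mem_sdiff, Finset.mem_inter, Finset.mem_compl]
  have e2 : S \ sᶜ = S ∩ s := by
    ext x; simp [Finset.mem_sdiff, Finset.mem_inter, Finset.mem_compl]
  rw [e1, e2]
  exact if_congr and_comm rfl rfl

/-- The Shapley value of an `n`-leaf tree game is linear in the edge weights:
`φ_i = ∑_k (f(i,k)/(n·c(i,k))) · α_k`, where `c(i,k)` and `f(i,k) = n - c(i,k)` are the
numbers of leaves in the components of `T − k` containing and not containing leaf `i`. -/
theorem shapley_eq_split_count_combination {n : ℕ} {E : Type*} [Fintype E]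
    (hn : 2 ≤ n) (side : E → Finset (Fin n))
    (hnontriv : ∀ e, (side e).Nonempty ∧ side e ≠ Finset.univ)
    (hcompat : ∀ e e', Compatible (side e) (side e'))
    (α : E → ℝ) (i : Fin n) :
    shapley (treeGame side α) i =
      ∑ e, ((n - cnt side i e : ℕ) : ℝ) / ((n : ℝ) * (cnt side i e : ℝ)) * α e := by
  rw [shapley_linear]
  refine Finset.sum_congr rfl fun e _ => ?_
  obtain ⟨hne, hnu⟩ := hnontriv e
  have hcard_le : (side e).card ≤ n := by
    simpa using Finset.card_le_card (Finset.subset_univ (side e))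
  by_cases hie : i ∈ side e
  · rw [shapley_cut hn (side e) i hie hnu, cnt, if_pos hie, mul_comm]
  · have hie' : i ∈ (side e)ᶜ := Finset.mem_compl.mpr hie
    have hnu' : (side e)ᶜ ≠ Finset.univ := by
      rw [Ne, Finset.compl_eq_univ_iff]
      exact Finset.nonempty_iff_ne_empty.mp hne
    rw [cut_compl, shapley_cut hn ((side e)ᶜ) i hie' hnu', cnt, if_neg hie, mul_comm,
      Finset.card_compl, Fintype.card_fin]
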